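/- Evaluation formula (3.19) for the inverse Dunkl–Cherednik operator: for every Laurent polynomial f ∈ F[U,U^{−1}] and every integer N ≥ 1, (𝒴′f)(−q^{2N}) = −t₁^{−1} q^{2N} f(−q^{2N}) + t̄₁ ∑_{p=0}^{N−1} q^{2p} f(−q^{2(2p−N)}) − t̄₂ ∑_{p=0}^{N−1} q^{2p+1} f(−q^{2(2p−N+1)}), where g(c) denotes the evaluation of g ∈ F[U,U^{−1}] at U = c. -/

import Mathlib

noncomputable section

open LaurentPolynomial

/-- The field `F = ℚ(q, t₁, t₂)` of rational functions in three indeterminates. -/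
abbrev F : Type := FractionRing (MvPolynomial (Fin 3) ℚ)

def q : F := algebraMap (MvPolynomial (Fin 3) ℚ) F (MvPolynomial.X 0)
def t1 : F := algebraMap (MvPolynomial (Fin 3) ℚ) F (MvPolynomial.X 1)
def t2 : F := algebraMap (MvPolynomial (Fin 3) ℚ) F (MvPolynomial.X 2)

/-- `a_k = (t̄₁ − t̄₂ q^{2k−1})/(1 − q^{4k−2})`. -/
def aop (k : ℤ) : F :=
  ((t1 - t1⁻¹) - (t2 - t2⁻¹) * q ^ (2 * k - 1)) / (1 - q ^ (4 * k - 2))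

/-- Evaluation of a Laurent polynomial `f ∈ F[U,U⁻¹]` at a point `c ∈ F`
(sending the monomial `U^k` to `c^k`). -/
def evalL (c : F) (f : LaurentPolynomial F) : F := Finsupp.sum f.coeff fun k r => r * c ^ k

-- ### Auxiliary lemmas

lemma algF_inj : Function.Injective (algebraMap (MvPolynomial (Fin 3) ℚ) F) :=
  IsFractionRing.injective _ _

lemma hq0 : q ≠ 0 := fun h =>
  MvPolynomial.X_ne_zero 0 (algF_inj (by rw [map_zero]; exact h))

lemma q_pow_ne_one (n : ℕ) (hn : 1 ≤ n) : q ^ n ≠ 1 := by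
  intro h
  have h' : (MvPolynomial.X 0 : MvPolynomial (Fin 3) ℚ) ^ n = 1 := by
    apply algF_inj
    rw [map_pow, map_one]
    exact h
  have h2 := congrArg (MvPolynomial.eval fun _ => (2 : ℚ)) h'
  simp only [map_pow, MvPolynomial.eval_X, map_one] at h2
  have h3 : (2:ℚ)^1 ≤ (2:ℚ)^n := pow_le_pow_right₀ one_le_two hn
  rw [h2] at h3
  norm_num at h3

lemma q_zpow_ne_one (n : ℤ) (hn : n ≠ 0) : q ^ n ≠ 1 := by
  rcases lt_or_gt_of_ne hn with h | h
  · intro hone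
    have h1 : q ^ (-n) = 1 := by rw [zpow_neg, hone, inv_one]
    lift -n to ℕ using (by omega) with m hm
    rw [zpow_natCast] at h1
    exact q_pow_ne_one m (by omega) h1
  · intro hone
    lift n to ℕ using (by omega) with m hm
    rw [zpow_natCast] at hone
    exact q_pow_ne_one m (by omega) hone

lemma evalL_T (c : F) (k : ℤ) : evalL c (T k) = c ^ k := by
  show Finsupp.sum (Finsupp.single k (1:F)) (fun n r => r * c ^ n) = c ^ k
  rw [Finsupp.sum_single_index (zero_mul (c ^ k)), one_mul]

lemma evalL_add (c : F) (f g : LaurentPolynomial F) :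
    evalL c (f + g) = evalL c f + evalL c g := by
  unfold evalL; rw [AddMonoidAlgebra.coeff_add]; exact Finsupp.sum_add_index' (fun i => zero_mul (c ^ i)) (fun i r s => add_mul r s (c ^ i))

lemma evalL_sub (c : F) (f g : LaurentPolynomial F) :
    evalL c (f - g) = evalL c f - evalL c g := by
  unfold evalL; rw [AddMonoidAlgebra.coeff_sub]; exact Finsupp.sum_sub_index (fun i r s => sub_mul r s (c ^ i))

lemma evalL_smul (c : F) (b : F) (f : LaurentPolynomial F) :
    evalL c (b • f) = b * evalL c f := by
  show Finsupp.sum (b • f).coeff (fun n r => r * c ^ n)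
    = b * Finsupp.sum f.coeff (fun n r => r * c ^ n)
  rw [AddMonoidAlgebra.coeff_smul, Finsupp.sum_smul_index (h := fun n r => r * c ^ n) (fun i => zero_mul (c ^ i)), Finsupp.mul_sum]
  exact Finsupp.sum_congr fun i _ => mul_assoc b _ _

lemma evalL_addF (c : F) (f g : LaurentPolynomial F) :
    evalL c (f + g) = evalL c f + evalL c g := by
  unfold evalL; rw [AddMonoidAlgebra.coeff_add]; exact Finsupp.sum_add_index' (fun i => zero_mul (c ^ i)) (fun i r s => add_mul r s (c ^ i))

lemma evalL_single (c : F) (a : ℤ) (b : F) :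
    evalL c (AddMonoidAlgebra.single a b : LaurentPolynomial F) = b * c ^ a := by
  unfold evalL; rw [AddMonoidAlgebra.coeff_single]; exact Finsupp.sum_single_index (zero_mul (c ^ a))

lemma evalL_zero (c : F) : evalL c (0 : LaurentPolynomial F) = 0 := by
  unfold evalL; rw [AddMonoidAlgebra.coeff_zero]; exact Finsupp.sum_zero_index

lemma qcoll (E1 E2 : ℤ) (h : E1 = E2) : q ^ E1 = q ^ E2 := by rw [h]

/-- The purely algebraic identity at the heart of the computation. -/
lemma final_identity {K : Type*} [Field K] (u v s y P B a G : K) (hP : P ≠ 0)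
    (ha : a * (y ^ 2 - 1) = (u - u⁻¹) * y ^ 2 - (v - v⁻¹) * y)
    (hG : G * (y ^ 2 - 1) = P ^ 2 * B - 1) :
    u * (-(s * P * B)) - a * (-(s * P * B) + s * P⁻¹) + (u - u⁻¹) * (s * P⁻¹)
    = -u⁻¹ * B * (s * P) + (u - u⁻¹) * (s * P⁻¹ * G) - (v - v⁻¹) * (s * P⁻¹ * y * G) := by
  have hPP : P⁻¹ * P ^ 2 = P := by
    rw [pow_two, ← mul_assoc, inv_mul_cancel₀ hP, one_mul]
  linear_combination (s * P⁻¹ * G) * ha - ((a - (u - u⁻¹)) * s * P⁻¹) * hG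
    - ((a - (u - u⁻¹)) * s * B) * hPP

/-- The key scalar computation for a single monomial `T k`. -/
lemma key (N : ℕ) (hN : 1 ≤ N) (k : ℤ) :
    t1 * (-(q ^ (2 * (N : ℤ)))) ^ (k + 1)
      - aop (-k) * ((-(q ^ (2 * (N : ℤ)))) ^ (k + 1) + (-(q ^ (2 * (N : ℤ)))) ^ (-k))
      + (t1 - t1⁻¹) * (-(q ^ (2 * (N : ℤ)))) ^ (-k)
    = -t1⁻¹ * q ^ (2 * (N : ℤ)) * (-(q ^ (2 * (N : ℤ)))) ^ k
      + (t1 - t1⁻¹) * ∑ p ∈ Finset.range N,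
          q ^ (2 * (p : ℤ)) * (-(q ^ (2 * (2 * (p : ℤ) - (N : ℤ))))) ^ k
      - (t2 - t2⁻¹) * ∑ p ∈ Finset.range N,
          q ^ (2 * (p : ℤ) + 1) * (-(q ^ (2 * (2 * (p : ℤ) - (N : ℤ) + 1)))) ^ k := by
  set s : F := (-1 : F) ^ k with hs_def
  set y : F := q ^ (2 * k + 1) with hy_def
  set P : F := q ^ (2 * k * (N : ℤ)) with hP_def
  set B : F := q ^ (2 * (N : ℤ)) with hB_def
  have hy : y ≠ 0 := hy_def ▸ zpow_ne_zero _ hq0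
  have hP : P ≠ 0 := hP_def ▸ zpow_ne_zero _ hq0
  have hB : B ≠ 0 := hB_def ▸ zpow_ne_zero _ hq0
  have hss : s * s = 1 := by
    rw [hs_def, ← zpow_add₀ (by norm_num : (-1 : F) ≠ 0),
      show k + k = 2 * k by ring, zpow_mul]
    norm_num
  have hsinv : s⁻¹ = s := inv_eq_of_mul_eq_one_right hss
  have collect : ∀ e1 e2 : ℤ, q ^ e1 * (-(q ^ e2)) ^ k = s * q ^ (e1 + e2 * k) := by
    intro e1 e2
    rw [show -(q ^ e2) = (-1) * q ^ e2 by ring, mul_zpow, ← zpow_mul, ← hs_def,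
      zpow_add₀ hq0]
    ring
  have hBk : (-B) ^ k = s * P := by
    rw [hB_def, hP_def, hs_def,
      show -(q ^ (2 * (N:ℤ))) = (-1) * q ^ (2 * (N:ℤ)) by ring, mul_zpow, ← zpow_mul,
      qcoll (2 * (N:ℤ) * k) (2 * k * (N:ℤ)) (by ring)]
  have hBk1 : (-B) ^ (k + 1) = -(s * P * B) := by
    rw [zpow_add₀ (neg_ne_zero.mpr hB), hBk, zpow_one]
    ring
  have hBmk : (-B) ^ (-k) = s * P⁻¹ := by
    rw [zpow_neg, hBk, mul_inv, hsinv]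
  have e1 : q ^ (2 * (-k) - 1) = y⁻¹ := by
    rw [show (2 * (-k) - 1 : ℤ) = -(2 * k + 1) by ring, zpow_neg, ← hy_def]
  have e2 : q ^ (4 * (-k) - 2) = (y ^ 2)⁻¹ := by
    rw [show (4 * (-k) - 2 : ℤ) = -((2 * k + 1) * 2) by ring, zpow_neg, zpow_mul,
      ← hy_def, show ((2:ℤ)) = ((2:ℕ):ℤ) by norm_num, zpow_natCast]
  have haop : aop (-k) = ((t1 - t1⁻¹) - (t2 - t2⁻¹) * y⁻¹) / (1 - (y ^ 2)⁻¹) := by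
    simp only [aop]
    rw [e1, e2]
  have hy1 : y ^ 2 ≠ 1 := by
    rw [hy_def, ← zpow_natCast (q ^ (2 * k + 1)) 2, ← zpow_mul]
    apply q_zpow_ne_one
    push_cast
    omega
  have hy2 : y ^ 2 - 1 ≠ 0 := sub_ne_zero_of_ne hy1
  have hy2' : 1 - (y ^ 2)⁻¹ ≠ 0 := by
    rw [sub_ne_zero]
    intro h
    exact hy1 (by rw [← inv_inv (y ^ 2), ← h, inv_one])
  have h4 : y⁻¹ * y ^ 2 = y := by
    rw [pow_two, ← mul_assoc, inv_mul_cancel₀ hy, one_mul]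
  have hDen : (1 - (y ^ 2)⁻¹) * y ^ 2 = y ^ 2 - 1 := by
    rw [sub_mul, one_mul, inv_mul_cancel₀ (pow_ne_zero 2 hy)]
  have hNum : aop (-k) * (1 - (y ^ 2)⁻¹) = (t1 - t1⁻¹) - (t2 - t2⁻¹) * y⁻¹ := by
    rw [haop, div_mul_cancel₀ _ hy2']
  have ha : aop (-k) * (y ^ 2 - 1) = (t1 - t1⁻¹) * y ^ 2 - (t2 - t2⁻¹) * y := by
    rw [← hDen, ← mul_assoc, hNum, sub_mul, mul_assoc (t2 - t2⁻¹), h4]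
  have hG : (P ^ 2 * B - 1) / (y ^ 2 - 1) * (y ^ 2 - 1) = P ^ 2 * B - 1 :=
    div_mul_cancel₀ _ hy2
  have hxp : ∀ p : ℕ, (y ^ 2) ^ p = q ^ ((4 * k + 2) * (p : ℤ)) := by
    intro p
    rw [← pow_mul, hy_def, ← zpow_natCast (q ^ (2 * k + 1)) (2 * p), ← zpow_mul]
    exact qcoll _ _ (by push_cast; ring)
  have hgeq : (y ^ 2) ^ N = P ^ 2 * B := by
    rw [hxp N, hP_def, hB_def, ← zpow_natCast (q ^ (2 * k * (N:ℤ))) 2, ← zpow_mul,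
      ← zpow_add₀ hq0]
    exact qcoll _ _ (by push_cast; ring)
  have hsum1 : ∑ p ∈ Finset.range N,
      q ^ (2 * (p : ℤ)) * (-(q ^ (2 * (2 * (p : ℤ) - (N : ℤ))))) ^ k
      = s * P⁻¹ * ((P ^ 2 * B - 1) / (y ^ 2 - 1)) := by
    have hterm : ∀ p ∈ Finset.range N,
        q ^ (2 * (p : ℤ)) * (-(q ^ (2 * (2 * (p : ℤ) - (N : ℤ))))) ^ k
          = (s * P⁻¹) * (y ^ 2) ^ p := by
      intro p _
      rw [collect, hxp p, hP_def, ← zpow_neg, mul_assoc s, ← zpow_add₀ hq0]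
      congr 1
      exact qcoll _ _ (by push_cast; ring)
    rw [Finset.sum_congr rfl hterm, ← Finset.mul_sum, geom_sum_eq hy1, hgeq]
  have hsum2 : ∑ p ∈ Finset.range N,
      q ^ (2 * (p : ℤ) + 1) * (-(q ^ (2 * (2 * (p : ℤ) - (N : ℤ) + 1)))) ^ k
      = s * P⁻¹ * y * ((P ^ 2 * B - 1) / (y ^ 2 - 1)) := by
    have hterm : ∀ p ∈ Finset.range N,
        q ^ (2 * (p : ℤ) + 1) * (-(q ^ (2 * (2 * (p : ℤ) - (N : ℤ) + 1)))) ^ k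
          = (s * P⁻¹ * y) * (y ^ 2) ^ p := by
      intro p _
      rw [collect, hxp p, hP_def, hy_def, ← zpow_neg, mul_assoc s, ← zpow_add₀ hq0,
        mul_assoc s, ← zpow_add₀ hq0]
      congr 1
      exact qcoll _ _ (by push_cast; ring)
    rw [Finset.sum_congr rfl hterm, ← Finset.mul_sum, geom_sum_eq hy1, hgeq]
  rw [hBk1, hBmk, hBk, hsum1, hsum2]
  exact final_identity t1 t2 s y P B (aop (-k)) ((P ^ 2 * B - 1) / (y ^ 2 - 1)) hP ha hG

set_option maxHeartbeats 1000000 in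
theorem evaluation_formula_inverse_Dunkl_Cherednik
    (Y' : Module.End F (LaurentPolynomial F))
    (hY' : ∀ k : ℤ, Y' (T k) =
      t1 • T (k + 1) - aop (-k) • (T (k + 1) + T (-k)) + (t1 - t1⁻¹) • T (-k))
    (f : LaurentPolynomial F) (N : ℕ) (hN : 1 ≤ N) :
    evalL (-(q ^ (2 * (N : ℤ)))) (Y' f) =
      -t1⁻¹ * q ^ (2 * (N : ℤ)) * evalL (-(q ^ (2 * (N : ℤ)))) f
      + (t1 - t1⁻¹) * ∑ p ∈ Finset.range N,
          q ^ (2 * (p : ℤ)) * evalL (-(q ^ (2 * (2 * (p : ℤ) - (N : ℤ))))) f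
      - (t2 - t2⁻¹) * ∑ p ∈ Finset.range N,
          q ^ (2 * (p : ℤ) + 1) * evalL (-(q ^ (2 * (2 * (p : ℤ) - (N : ℤ) + 1)))) f := by
  induction f using AddMonoidAlgebra.induction_linear with
  | zero =>
    rw [map_zero]
    simp only [evalL_zero, mul_zero, Finset.sum_const_zero, add_zero, sub_zero]
  | add f g hf hg =>
    have split1 : ∑ p ∈ Finset.range N,
        q ^ (2 * (p : ℤ)) * evalL (-(q ^ (2 * (2 * (p : ℤ) - (N : ℤ))))) (f + g)
        = (∑ p ∈ Finset.range N,
            q ^ (2 * (p : ℤ)) * evalL (-(q ^ (2 * (2 * (p : ℤ) - (N : ℤ))))) f)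
          + ∑ p ∈ Finset.range N,
            q ^ (2 * (p : ℤ)) * evalL (-(q ^ (2 * (2 * (p : ℤ) - (N : ℤ))))) g := by
      rw [← Finset.sum_add_distrib]
      exact Finset.sum_congr rfl fun p _ => by rw [evalL_addF, mul_add]
    have split2 : ∑ p ∈ Finset.range N,
        q ^ (2 * (p : ℤ) + 1) * evalL (-(q ^ (2 * (2 * (p : ℤ) - (N : ℤ) + 1)))) (f + g)
        = (∑ p ∈ Finset.range N,
            q ^ (2 * (p : ℤ) + 1) * evalL (-(q ^ (2 * (2 * (p : ℤ) - (N : ℤ) + 1)))) f)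
          + ∑ p ∈ Finset.range N,
            q ^ (2 * (p : ℤ) + 1) * evalL (-(q ^ (2 * (2 * (p : ℤ) - (N : ℤ) + 1)))) g := by
      rw [← Finset.sum_add_distrib]
      exact Finset.sum_congr rfl fun p _ => by rw [evalL_addF, mul_add]
    rw [map_add, evalL_add, hf, hg, split1, split2,
      show evalL (-(q ^ (2 * (N : ℤ)))) (f + g)
        = evalL (-(q ^ (2 * (N : ℤ)))) f + evalL (-(q ^ (2 * (N : ℤ)))) g from
        evalL_addF _ f g]
    ring
  | single a b =>
    have hsingle : b • T a = (AddMonoidAlgebra.single a b : LaurentPolynomial F) := by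
      rw [show (T a : LaurentPolynomial F) = AddMonoidAlgebra.single a (1:F) from rfl,
        AddMonoidAlgebra.smul_single', mul_one]
    conv_lhs => rw [← hsingle]
    rw [map_smul, evalL_smul, hY' a]
    simp only [evalL_add, evalL_sub, evalL_smul, evalL_T, evalL_single]
    have hsums1 : ∑ p ∈ Finset.range N,
        q ^ (2 * (p : ℤ)) * (b * (-(q ^ (2 * (2 * (p : ℤ) - (N : ℤ))))) ^ a)
        = b * ∑ p ∈ Finset.range N,
          q ^ (2 * (p : ℤ)) * (-(q ^ (2 * (2 * (p : ℤ) - (N : ℤ))))) ^ a := by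
      rw [Finset.mul_sum]
      exact Finset.sum_congr rfl fun p _ => by ring
    have hsums2 : ∑ p ∈ Finset.range N,
        q ^ (2 * (p : ℤ) + 1) * (b * (-(q ^ (2 * (2 * (p : ℤ) - (N : ℤ) + 1)))) ^ a)
        = b * ∑ p ∈ Finset.range N,
          q ^ (2 * (p : ℤ) + 1) * (-(q ^ (2 * (2 * (p : ℤ) - (N : ℤ) + 1)))) ^ a := by
      rw [Finset.mul_sum]
      exact Finset.sum_congr rfl fun p _ => by ring
    rw [hsums1, hsums2]
    linear_combination b * key N hN a

end
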